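/- Fix d ≥ 2, an inverse temperature β ∈ ℝ, energy levels ε : Fin d → ℝ, and a nonzero vector r : Fin d → ℝ with ∑_n r_n = 0. Then there exists a matrix W : Matrix (Fin d) (Fin d) ℝ and a strictly decreasing sequence of reals λ_1 > λ_2 > … > λ_d with λ_1 = 0 such that: (1) W_{mn} > 0 for all m ≠ n and every column of W sums to 0; (2) W satisfies detailed balance: W_{mn}·exp(−β ε_n) = W_{nm}·exp(−β ε_m) for all m, n; (3) the characteristic polynomial of W is ∏_{i=1}^d (X − λ_i), so the eigenvalues of W are exactly the distinct values λ_1, …, λ_d; (4) W·r = λ_2·r, i.e., r is a right eigenvector for the second largest eigenvalue λ_2. -/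

import Mathlib

open Finset Real Polynomial


section AuxLemmas
open Matrix

lemma my_charpoly_conj {n : Type*} [Fintype n] [DecidableEq n]
    (P A : Matrix n n ℝ) (h : IsUnit P.det) :
    (P * A * P⁻¹).charpoly = A.charpoly := by
  have hPC : (P.map (C : ℝ →+* ℝ[X])) * (P⁻¹.map C) = 1 := by
    rw [← Matrix.map_mul, Matrix.mul_nonsing_inv _ h]
    simp
  have key : Matrix.charmatrix (P * A * P⁻¹)
      = P.map C * Matrix.charmatrix A * P⁻¹.map C := by
    rw [Matrix.charmatrix, Matrix.charmatrix, Matrix.mul_sub, Matrix.sub_mul]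
    congr 1
    · have hscalar : (Matrix.scalar n (X : ℝ[X])) = (X : ℝ[X]) • (1 : Matrix n n ℝ[X]) := by
        simp [Matrix.scalar, Matrix.smul_eq_diagonal_mul]
      rw [hscalar, Matrix.mul_smul, mul_one, Matrix.smul_mul, hPC]
    · simp [RingHom.mapMatrix_apply, Matrix.map_mul, Matrix.mul_assoc]
  rw [Matrix.charpoly, key, Matrix.det_mul, Matrix.det_mul, Matrix.charpoly]
  have h2 : (P.map (C : ℝ →+* ℝ[X])).det * (P⁻¹.map C).det = 1 := by
    rw [← Matrix.det_mul, hPC, Matrix.det_one]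
  calc (P.map (C : ℝ →+* ℝ[X])).det * (Matrix.charmatrix A).det * (P⁻¹.map C).det
      = (Matrix.charmatrix A).det * ((P.map C).det * (P⁻¹.map C).det) := by ring
    _ = (Matrix.charmatrix A).det := by rw [h2, mul_one]

lemma exists_orthcols {d : ℕ} (hd : 2 ≤ d) (u v : Fin d → ℝ) (hu : u ≠ 0) (hv : v ≠ 0)
    (huv : ∑ n, u n * v n = 0) :
    ∃ (Q : Matrix (Fin d) (Fin d) ℝ) (s t : ℝ), 0 < s ∧ 0 < t ∧
      Qᵀ * Q = 1 ∧ (∀ n, u n = s * Q n ⟨0, by have := hu; omega⟩) ∧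
        (∀ n, v n = t * Q n ⟨1, by have := hu; omega⟩) := by
  have i0 : Fin d := ⟨0, by omega⟩
  let uE : EuclideanSpace ℝ (Fin d) := WithLp.toLp 2 u
  let vE : EuclideanSpace ℝ (Fin d) := WithLp.toLp 2 v
  have huE : uE ≠ 0 := by
    intro h; exact hu (by simpa [uE] using congrArg WithLp.ofLp h)
  have hvE : vE ≠ 0 := by
    intro h; exact hv (by simpa [vE] using congrArg WithLp.ofLp h)
  have hinner : (inner ℝ uE vE) = 0 := by
    rw [PiLp.inner_apply]
    simpa [uE, vE, mul_comm] using huv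
  have hnu : ‖uE‖ ≠ 0 := norm_ne_zero_iff.mpr huE
  have hnv : ‖vE‖ ≠ 0 := norm_ne_zero_iff.mpr hvE
  set E1 : EuclideanSpace ℝ (Fin d) := ‖uE‖⁻¹ • uE with hE1
  set E2 : EuclideanSpace ℝ (Fin d) := ‖vE‖⁻¹ • vE with hE2
  set fvec : Fin d → EuclideanSpace ℝ (Fin d) :=
    fun i => if i = ⟨0, by omega⟩ then E1 else E2 with hfvec
  set s : Set (Fin d) := {⟨0, by omega⟩, ⟨1, by omega⟩} with hs
  have h01 : (⟨0, by omega⟩ : Fin d) ≠ ⟨1, by omega⟩ := by simp [Fin.ext_iff]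
  have horth : Orthonormal ℝ (s.restrict fvec) := by
    have hE1n : ‖E1‖ = 1 := norm_smul_inv_norm huE
    have hE2n : ‖E2‖ = 1 := norm_smul_inv_norm hvE
    have hinner12 : (inner ℝ E1 E2) = 0 := by
      rw [hE1, hE2, real_inner_smul_left, real_inner_smul_right, hinner]
      ring
    have hinner11 : (inner ℝ E1 E1) = 1 := by
      rw [real_inner_self_eq_norm_mul_norm, hE1n]; norm_num
    have hinner22 : (inner ℝ E2 E2) = 1 := by
      rw [real_inner_self_eq_norm_mul_norm, hE2n]; norm_num
    have hinner21 : (inner ℝ E2 E1) = 0 := by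
      rw [real_inner_comm]; exact hinner12
    rw [orthonormal_iff_ite]
    rintro ⟨i, hi⟩ ⟨j, hj⟩
    simp only [Set.restrict, Set.domRestrict_apply]
    rcases hi with rfl | hi
    · rcases hj with rfl | hj
      · simpa [hfvec] using hinner11
      · rw [Set.mem_singleton_iff] at hj; subst hj
        simpa [hfvec, h01, h01.symm, Subtype.ext_iff] using hinner12
    · rw [Set.mem_singleton_iff] at hi; subst hi
      rcases hj with rfl | hj
      · simpa [hfvec, h01, h01.symm, Subtype.ext_iff] using hinner21
      · rw [Set.mem_singleton_iff] at hj; subst hj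
        simpa [hfvec, h01, h01.symm] using hinner22
  have hcard : Module.finrank ℝ (EuclideanSpace ℝ (Fin d)) = Fintype.card (Fin d) := by
    simp [finrank_euclideanSpace]
  obtain ⟨b, hb⟩ := horth.exists_orthonormalBasis_extension_of_card_eq hcard
  have hb0 : b ⟨0, by omega⟩ = E1 := by
    rw [hb ⟨0, by omega⟩ (by simp [hs])]
    simp [hfvec]
  have hb1 : b ⟨1, by omega⟩ = E2 := by
    rw [hb ⟨1, by omega⟩ (by simp [hs])]
    simp [hfvec, if_neg h01.symm]
  refine ⟨Matrix.of (fun m i => b i m), ‖uE‖, ‖vE‖,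
    lt_of_le_of_ne (norm_nonneg _) (Ne.symm hnu),
    lt_of_le_of_ne (norm_nonneg _) (Ne.symm hnv), ?_, ?_, ?_⟩
  · ext i j
    have := orthonormal_iff_ite.mp b.orthonormal i j
    rw [PiLp.inner_apply] at this
    simp only [Matrix.mul_apply, Matrix.transpose_apply, Matrix.of_apply, Matrix.one_apply]
    simpa [mul_comm] using this
  · intro n
    have : E1 n = ‖uE‖⁻¹ * u n := by rw [hE1]; simp [uE]
    rw [Matrix.of_apply, hb0, this]
    field_simp
  · intro n
    have : E2 n = ‖vE‖⁻¹ * v n := by rw [hE2]; simp [vE]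
    rw [Matrix.of_apply, hb1, this]
    field_simp

end AuxLemmas

open Matrix in
/-- For any inverse temperature, energy levels, and nonzero vector `r` with zero sum,
there exists a nondegenerate detailed-balanced transition (rate) matrix having `r`
as the right eigenvector of its second largest eigenvalue. -/
theorem exists_transition_matrix_with_eigenvector {d : ℕ} (hd : 2 ≤ d)
    (β : ℝ) (ε : Fin d → ℝ) (r : Fin d → ℝ) (hr : r ≠ 0) (hrsum : ∑ n, r n = 0) :
    ∃ (W : Matrix (Fin d) (Fin d) ℝ) (lam : Fin d → ℝ),
      StrictAnti lam ∧ lam ⟨0, by omega⟩ = 0 ∧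
      -- (1) transition rate matrix: positive off-diagonal entries, columns sum to zero
      (∀ m n, m ≠ n → 0 < W m n) ∧ (∀ n, ∑ m, W m n = 0) ∧
      -- (2) detailed balance with respect to the Gibbs distribution at β
      (∀ m n, W m n * Real.exp (-β * ε n) = W n m * Real.exp (-β * ε m)) ∧
      -- (3) the eigenvalues of W are exactly the distinct values λ_1, …, λ_d
      W.charpoly = ∏ i, (X - C (lam i)) ∧
      -- (4) r is a right eigenvector for the second largest eigenvalue λ_2
      W.mulVec r = lam ⟨1, by omega⟩ • r := by
  obtain ⟨u, hupos, husq⟩ : ∃ u : Fin d → ℝ, (∀ n, 0 < u n) ∧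
      ∀ n, u n * u n = Real.exp (-β * ε n) :=
    ⟨fun n => Real.exp (-β * ε n / 2), fun n => Real.exp_pos _,
      fun n => by rw [← Real.exp_add]; ring_nf⟩
  obtain ⟨v, hrv⟩ : ∃ v : Fin d → ℝ, ∀ n, r n = u n * v n :=
    ⟨fun n => r n / u n, fun n => by
      rw [mul_comm, div_mul_cancel₀ _ (ne_of_gt (hupos n))]⟩
  have hu0 : u ≠ 0 := by
    intro h
    exact absurd (congrFun h ⟨0, by omega⟩) (ne_of_gt (hupos _))
  have hv0 : v ≠ 0 := by
    intro h
    apply hr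
    funext n
    rw [hrv n, congrFun h n]
    simp
  have huv : ∑ n, u n * v n = 0 := by
    rw [← hrsum]
    exact Finset.sum_congr rfl fun n _ => (hrv n).symm
  obtain ⟨Q, s, t, hspos, htpos, hQTQ, hQu, hQv⟩ := exists_orthcols hd u v hu0 hv0 huv
  have hQQT : Q * Qᵀ = 1 := mul_eq_one_comm.mp hQTQ
  have hortho : ∀ i j, ∑ m, Q m i * Q m j = if i = j then 1 else 0 := by
    intro i j
    have := Matrix.ext_iff.mpr hQTQ i j
    simpa [Matrix.mul_apply, Matrix.one_apply] using this
  have hQle : ∀ m i, |Q m i| ≤ 1 := by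
    intro m i
    rw [← sq_le_one_iff_abs_le_one]
    have hrow := Matrix.ext_iff.mpr hQQT m m
    simp only [Matrix.mul_apply, Matrix.transpose_apply, Matrix.one_apply_eq] at hrow
    calc Q m i ^ 2 = Q m i * Q m i := sq (Q m i) ▸ rfl
      _ ≤ ∑ j, Q m j * Q m j :=
          Finset.single_le_sum (fun j _ => mul_self_nonneg (Q m j)) (Finset.mem_univ i)
      _ = 1 := hrow
  -- positive lower bound on the first column of Q
  set cb : ℝ := Finset.univ.inf' (⟨⟨0, by omega⟩, Finset.mem_univ _⟩ : Finset.univ.Nonempty)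
      (fun m => Q m ⟨0, by omega⟩) with hcb
  have hcbpos : 0 < cb := by
    rw [hcb]; apply (Finset.lt_inf'_iff _).mpr
    intro m _
    have := hQu m
    nlinarith [hupos m, hspos]
  have hcble : ∀ m, cb ≤ Q m ⟨0, by omega⟩ := fun m => Finset.inf'_le _ (Finset.mem_univ m)
  have hdpos : (0:ℝ) < d := by exact_mod_cast (by omega : 0 < d)
  set η : ℝ := cb ^ 2 / (2 * (d:ℝ) * d) with hη
  have hηpos : 0 < η := by rw [hη]; positivity
  set lam : Fin d → ℝ :=
    fun i => if i = ⟨0, by omega⟩ then (0:ℝ) else -1 - η * (i.val : ℝ) with hlam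
  set S := Q * Matrix.diagonal lam * Qᵀ with hSdef
  set W := Matrix.diagonal u * S * Matrix.diagonal (fun n => (u n)⁻¹) with hWdef
  have hSapply : ∀ m n, S m n = ∑ i, lam i * (Q m i * Q n i) := by
    intro m n
    rw [hSdef, Matrix.mul_apply]
    exact Finset.sum_congr rfl fun i _ => by
      rw [Matrix.mul_diagonal, Matrix.transpose_apply]; ring
  have hSsymm : ∀ m n, S m n = S n m := by
    intro m n
    rw [hSapply, hSapply]
    exact Finset.sum_congr rfl fun i _ => by ring
  have hWapply : ∀ m n, W m n = u m * S m n * (u n)⁻¹ := by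
    intro m n
    rw [hWdef, Matrix.mul_diagonal, Matrix.diagonal_mul]
  -- the key eigenvector computation
  have hmv : ∀ (j : Fin d) (c : ℝ),
      (S.mulVec fun n => c * Q n j) = fun n => lam j * c * Q n j := by
    intro j c
    funext n
    simp only [Matrix.mulVec, dotProduct]
    calc ∑ m, S n m * (c * Q m j)
        = ∑ m, ∑ i, (lam i * Q n i * c) * (Q m i * Q m j) := by
          refine Finset.sum_congr rfl fun m _ => ?_
          rw [hSapply, Finset.sum_mul]
          exact Finset.sum_congr rfl fun i _ => by ring
      _ = ∑ i, ∑ m, (lam i * Q n i * c) * (Q m i * Q m j) := Finset.sum_comm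
      _ = ∑ i, (lam i * Q n i * c) * ∑ m, Q m i * Q m j := by
          exact Finset.sum_congr rfl fun i _ => (Finset.mul_sum _ _ _).symm
      _ = ∑ i, (lam i * Q n i * c) * (if i = j then 1 else 0) := by
          exact Finset.sum_congr rfl fun i _ => by rw [hortho]
      _ = ∑ i, (if i = j then lam i * Q n i * c else 0) := by
          refine Finset.sum_congr rfl fun i _ => ?_
          split <;> simp
      _ = lam j * c * Q n j := by
          rw [Finset.sum_ite_eq' Finset.univ j (fun i => lam i * Q n i * c)]
          simp
          ring
  -- off-diagonal positivity of S
  have hSoff : ∀ m n, m ≠ n → 0 < S m n := by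
    intro m n hmn
    have hQQTmn : ∑ i, Q m i * Q n i = 0 := by
      have := Matrix.ext_iff.mpr hQQT m n
      simpa [Matrix.mul_apply, Matrix.one_apply, hmn] using this
    set T : ℝ := ∑ i, (if i = ⟨0, by omega⟩ then 0 else η * (i.val:ℝ)) * (Q m i * Q n i)
      with hT
    have hsplit : S m n = Q m ⟨0, by omega⟩ * Q n ⟨0, by omega⟩ - T := by
      have h1 : ∀ i : Fin d, lam i * (Q m i * Q n i)
          = (-(Q m i * Q n i) + (if i = ⟨0, by omega⟩ then Q m i * Q n i else 0))
            - (if i = ⟨0, by omega⟩ then 0 else η * (i.val:ℝ)) * (Q m i * Q n i) := by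
        intro i
        by_cases h : i = ⟨0, by omega⟩ <;> simp [hlam, h] <;> ring
      rw [hSapply, Finset.sum_congr rfl fun i _ => h1 i, Finset.sum_sub_distrib,
        Finset.sum_add_distrib, Finset.sum_neg_distrib, hQQTmn,
        Finset.sum_ite_eq' Finset.univ ⟨0, by omega⟩ (fun i => Q m i * Q n i)]
      simp [hT]
    have hTbound : |T| ≤ η * d * d := by
      rw [hT]
      calc |∑ i, (if i = ⟨0, by omega⟩ then 0 else η * (i.val:ℝ)) * (Q m i * Q n i)|
          ≤ ∑ i, |(if i = ⟨0, by omega⟩ then 0 else η * (i.val:ℝ)) * (Q m i * Q n i)| :=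
            Finset.abs_sum_le_sum_abs _ _
        _ ≤ ∑ _i : Fin d, η * d := by
            refine Finset.sum_le_sum fun i _ => ?_
            by_cases h : i = ⟨0, by omega⟩
            · rw [h]; simp; positivity
            · rw [if_neg h, abs_mul,
                abs_of_nonneg (by positivity : (0:ℝ) ≤ η * (i.val:ℝ))]
              have h1 : |Q m i * Q n i| ≤ 1 := by
                rw [abs_mul]
                exact mul_le_one₀ (hQle m i) (abs_nonneg _) (hQle n i)
              have hi : (i.val : ℝ) ≤ d := by exact_mod_cast le_of_lt i.isLt
              have h2 : η * (i.val:ℝ) * |Q m i * Q n i| ≤ η * (i.val:ℝ) * 1 :=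
                mul_le_mul_of_nonneg_left h1 (by positivity)
              have h3 : η * (i.val:ℝ) ≤ η * d :=
                mul_le_mul_of_nonneg_left hi hηpos.le
              linarith
        _ = η * d * d := by
            rw [Finset.sum_const, Finset.card_univ, Fintype.card_fin, nsmul_eq_mul]
            ring
    have hcb2 : cb * cb ≤ Q m ⟨0, by omega⟩ * Q n ⟨0, by omega⟩ :=
      mul_le_mul (hcble m) (hcble n) hcbpos.le ((hcbpos.trans_le (hcble m)).le)
    have hηd : η * d * d = cb ^ 2 / 2 := by
      rw [hη]; field_simp
    have hsq : cb ^ 2 = cb * cb := sq cb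
    have hTle : T ≤ |T| := le_abs_self T
    nlinarith [mul_pos hcbpos hcbpos]
  refine ⟨W, lam, ?_, ?_, ?_, ?_, ?_, ?_, ?_⟩
  -- StrictAnti
  · intro i j hij
    by_cases hi : i = ⟨0, by omega⟩
    · have hj : j ≠ ⟨0, by omega⟩ := by
        intro hj
        rw [hi, ← hj] at hij
        exact lt_irrefl _ hij
      simp only [hlam]
      rw [if_pos hi, if_neg hj]
      have : 0 ≤ η * (j.val:ℝ) := by positivity
      linarith
    · have hj : j ≠ ⟨0, by omega⟩ := by
        intro hj
        rw [hj] at hij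
        exact absurd hij (by simp [Fin.lt_def])
      simp only [hlam]
      rw [if_neg hi, if_neg hj]
      have hij' : (i.val : ℝ) < j.val := by exact_mod_cast hij
      nlinarith [hηpos]
  -- lam 0 = 0
  · simp [hlam]
  -- positivity off diagonal
  · intro m n hmn
    rw [hWapply]
    exact mul_pos (mul_pos (hupos m) (hSoff m n hmn)) (inv_pos.mpr (hupos n))
  -- column sums
  · intro n
    have husum := hmv ⟨0, by omega⟩ s
    rw [show (fun k => s * Q k ⟨0, by omega⟩) = u from funext fun k => (hQu k).symm] at husum
    have h0 : ∑ m, S n m * u m = 0 := by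
      have := congrFun husum n
      simp only [Matrix.mulVec, dotProduct] at this
      rw [this, hlam]
      simp
    calc ∑ m, W m n = ∑ m, S n m * u m * (u n)⁻¹ := by
          refine Finset.sum_congr rfl fun m _ => ?_
          rw [hWapply, hSsymm m n]; ring
      _ = (∑ m, S n m * u m) * (u n)⁻¹ := by rw [Finset.sum_mul]
      _ = 0 := by rw [h0, zero_mul]
  -- detailed balance
  · intro m n
    rw [hWapply, hWapply, ← husq n, ← husq m, hSsymm m n]
    field_simp [(hupos m).ne', (hupos n).ne']
  -- charpoly
  · have hDD : Matrix.diagonal u * Matrix.diagonal (fun n => (u n)⁻¹) = 1 := by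
      rw [Matrix.diagonal_mul_diagonal,
        show (fun n => u n * (u n)⁻¹) = fun _ => (1:ℝ) from
          funext fun n => mul_inv_cancel₀ (ne_of_gt (hupos n)), Matrix.diagonal_one]
    have hright : (Matrix.diagonal u * Q) * (Qᵀ * Matrix.diagonal fun n => (u n)⁻¹) = 1 := by
      calc (Matrix.diagonal u * Q) * (Qᵀ * Matrix.diagonal fun n => (u n)⁻¹)
          = Matrix.diagonal u * (Q * Qᵀ) * Matrix.diagonal fun n => (u n)⁻¹ := by
            simp only [Matrix.mul_assoc]
        _ = 1 := by rw [hQQT, Matrix.mul_one, hDD]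
    have hdet := Matrix.isUnit_det_of_right_inverse hright
    have hinv : (Matrix.diagonal u * Q)⁻¹ = Qᵀ * Matrix.diagonal fun n => (u n)⁻¹ :=
      Matrix.inv_eq_right_inv hright
    have hWc : W = (Matrix.diagonal u * Q) * Matrix.diagonal lam * (Matrix.diagonal u * Q)⁻¹ := by
      rw [hinv, hWdef, hSdef]
      simp only [Matrix.mul_assoc]
    rw [hWc, my_charpoly_conj _ _ hdet,
      Matrix.charpoly_of_upperTriangular _ (Matrix.blockTriangular_diagonal lam)]
    exact Finset.prod_congr rfl fun i _ => by rw [Matrix.diagonal_apply_eq]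
  -- eigenvector
  · funext n
    have hvsum := congrFun (hmv ⟨1, by omega⟩ t) n
    simp only [Matrix.mulVec, dotProduct] at hvsum ⊢
    simp only [Pi.smul_apply, smul_eq_mul]
    calc ∑ k, W n k * r k = ∑ k, S n k * (t * Q k ⟨1, by omega⟩) * u n := by
          refine Finset.sum_congr rfl fun k _ => ?_
          rw [hWapply, hrv k, hQv k]
          field_simp [(hupos k).ne']
      _ = (∑ k, S n k * (t * Q k ⟨1, by omega⟩)) * u n := by rw [Finset.sum_mul]
      _ = lam ⟨1, by omega⟩ * t * Q n ⟨1, by omega⟩ * u n := by rw [hvsum]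
      _ = lam ⟨1, by omega⟩ * r n := by rw [hrv n, hQv n]; ring
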